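/- Let k, k♯ : ℝⁿ × ℝⁿ → ℝ be functions such that for all x, y ∈ ℝⁿ the map x ↦ k♯(x, y) is differentiable with ∇ₓ k♯(x, y) = k(x, y)(y − x), and suppose k♯ > 0 everywhere. Let y⁺₁, …, y⁺_M ∈ ℝⁿ and y⁻₁, …, y⁻_N ∈ ℝⁿ be finite families of points, with sharp kernel density estimates p_KDE♯(x) = (1/M) Σₘ k♯(x, y⁺ₘ) and q_KDE♯(x) = (1/N) Σⱼ k♯(x, y⁻ⱼ). Define the sharp-normalized drift field V♯(x) = (Σₘ k(x, y⁺ₘ)(y⁺ₘ − x))/(Σₘ k♯(x, y⁺ₘ)) − (Σⱼ k(x, y⁻ⱼ)(y⁻ⱼ − x))/(Σⱼ k♯(x, y⁻ⱼ)). Then for all x ∈ ℝⁿ, V♯(x) = −∇ₓ log( q_KDE♯(x) / p_KDE♯(x) ); in particular V♯ is conservative with scalar potential the log-KDE potential log(q_KDE♯(x)/p_KDE♯(x)). -/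

import Mathlib

noncomputable section

open InnerProductSpace

lemma hasGradientAt_log_sum {n m : ℕ} (hm : 0 < m)
    (k ks : EuclideanSpace ℝ (Fin n) → EuclideanSpace ℝ (Fin n) → ℝ)
    (hks : ∀ x y : EuclideanSpace ℝ (Fin n),
      HasGradientAt (fun x' => ks x' y) (k x y • (y - x)) x)
    (hpos : ∀ x y : EuclideanSpace ℝ (Fin n), 0 < ks x y)
    (y : Fin m → EuclideanSpace ℝ (Fin n)) (x : EuclideanSpace ℝ (Fin n)) :
    HasGradientAt (fun x' => Real.log (∑ j, ks x' (y j)))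
      ((∑ j, ks x (y j))⁻¹ • ∑ j, k x (y j) • (y j - x)) x := by
  haveI : NeZero m := ⟨hm.ne'⟩
  have hSpos : ∀ x', (0:ℝ) < ∑ j, ks x' (y j) := fun x' =>
    Finset.sum_pos (fun j _ => hpos x' (y j)) Finset.univ_nonempty
  have hS : HasFDerivAt (fun x' => ∑ j, ks x' (y j))
      (∑ j, (toDual ℝ _) (k x (y j) • (y j - x))) x := by
    exact HasFDerivAt.fun_sum (fun j _ => (hks x (y j)).hasFDerivAt)
  have hlog : HasDerivAt Real.log (∑ j, ks x (y j))⁻¹ (∑ j, ks x (y j)) :=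
    Real.hasDerivAt_log (hSpos x).ne'
  have := hlog.comp_hasFDerivAt x hS
  apply hasGradientAt_iff_hasFDerivAt.mpr
  convert this using 1
  · rfl
  · rfl
  rw [map_smul, map_sum]

theorem sharp_normalized_drift_eq_neg_grad_log_KDE {n M N : ℕ}
    (hM : 0 < M) (hN : 0 < N)
    (k ks : EuclideanSpace ℝ (Fin n) → EuclideanSpace ℝ (Fin n) → ℝ)
    (hks : ∀ x y : EuclideanSpace ℝ (Fin n),
      HasGradientAt (fun x' => ks x' y) (k x y • (y - x)) x)
    (hpos : ∀ x y : EuclideanSpace ℝ (Fin n), 0 < ks x y)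
    (yp : Fin M → EuclideanSpace ℝ (Fin n)) (yn : Fin N → EuclideanSpace ℝ (Fin n))
    (pKDEs qKDEs : EuclideanSpace ℝ (Fin n) → ℝ)
    (hp : ∀ x, pKDEs x = (1 / (M : ℝ)) * ∑ m, ks x (yp m))
    (hq : ∀ x, qKDEs x = (1 / (N : ℝ)) * ∑ j, ks x (yn j))
    (Vs : EuclideanSpace ℝ (Fin n) → EuclideanSpace ℝ (Fin n))
    (hVs : ∀ x, Vs x = (∑ m, ks x (yp m))⁻¹ • ∑ m, k x (yp m) • (yp m - x)
                     - (∑ j, ks x (yn j))⁻¹ • ∑ j, k x (yn j) • (yn j - x)) :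
    (∀ x, Vs x = -gradient (fun x' => Real.log (qKDEs x' / pKDEs x')) x) ∧
    ∃ L : EuclideanSpace ℝ (Fin n) → ℝ,
      (∀ x, L x = Real.log (qKDEs x / pKDEs x)) ∧ ∀ x, Vs x = -gradient L x := by
  haveI : NeZero M := ⟨hM.ne'⟩
  haveI : NeZero N := ⟨hN.ne'⟩
  have hSp : ∀ x', (0:ℝ) < ∑ m, ks x' (yp m) := fun x' =>
    Finset.sum_pos (fun m _ => hpos x' (yp m)) Finset.univ_nonempty
  have hSn : ∀ x', (0:ℝ) < ∑ j, ks x' (yn j) := fun x' =>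
    Finset.sum_pos (fun j _ => hpos x' (yn j)) Finset.univ_nonempty
  have hfun : (fun x' => Real.log (qKDEs x' / pKDEs x'))
      = fun x' => (Real.log (∑ j, ks x' (yn j)) - Real.log (∑ m, ks x' (yp m)))
          + (Real.log (1 / (N:ℝ)) - Real.log (1 / (M:ℝ))) := by
    funext x'
    have hNpos : (0:ℝ) < 1 / (N:ℝ) := by
      simp [Nat.cast_pos.mpr hN]
    have hMpos : (0:ℝ) < 1 / (M:ℝ) := by
      simp [Nat.cast_pos.mpr hM]
    rw [hp, hq, Real.log_div (mul_pos hNpos (hSn x')).ne' (mul_pos hMpos (hSp x')).ne',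
      Real.log_mul hNpos.ne' (hSn x').ne',
      Real.log_mul hMpos.ne' (hSp x').ne']
    ring
  have key : ∀ x, gradient (fun x' => Real.log (qKDEs x' / pKDEs x')) x
      = (∑ j, ks x (yn j))⁻¹ • ∑ j, k x (yn j) • (yn j - x)
        - (∑ m, ks x (yp m))⁻¹ • ∑ m, k x (yp m) • (yp m - x) := by
    intro x
    rw [hfun]
    have h1 := hasGradientAt_log_sum hN k ks hks hpos yn x
    have h2 := hasGradientAt_log_sum hM k ks hks hpos yp x
    have hF := (h1.hasFDerivAt.sub h2.hasFDerivAt).add_const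
      (Real.log (1 / (N:ℝ)) - Real.log (1 / (M:ℝ)))
    rw [← map_sub] at hF
    simpa using hF.hasGradientAt.gradient
  constructor
  · intro x
    rw [hVs, key]
    abel
  · exact ⟨fun x => Real.log (qKDEs x / pKDEs x), fun x => rfl,
      fun x => by rw [hVs, key]; abel⟩
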